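/- Let l > 0, γ₁ ∈ ℝ, γ₂ ≥ 0, γ₃ ≥ 0. Let τ : [0,l] → ℝ be continuously differentiable with τ(0) = 0 and τ(l) = 0. Let P, Q : [0,l] × [0,l] → ℝ be continuous, let P₁, Q₁ : [0,l] → ℝ be continuous, and assume that for all x, z ∈ [0,l]: ∂P/∂z(x,z) = −P₁(x)P₁(z), ∂Q/∂z(x,z) = −Q₁(x)Q₁(z), P(x,x) ≥ 0 and Q(x,x) ≤ 0. Then ∫_0^l τ(x) ( γ₁ τ'(x) + γ₂ ∫_0^x τ'(z) P(x,z) dz + γ₃ ∫_x^l τ'(z) Q(x,z) dz ) dx ≥ 0. -/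

import Mathlib

open Real Set intervalIntegral MeasureTheory Filter Topology

/-- Sign of the energy integral in the uniqueness proof of the homogeneous problem:
under the multiplicative-kernel and sign conditions, the energy integral
`∫_0^l τ (γ₁τ' + γ₂∫_0^x τ'P + γ₃∫_x^l τ'Q) dx` is nonnegative. -/
theorem energy_integral_nonneg
    (l γ₁ γ₂ γ₃ : ℝ) (hl : 0 < l) (hγ₂ : 0 ≤ γ₂) (hγ₃ : 0 ≤ γ₃)
    (τ τ' : ℝ → ℝ)
    (hτ' : ∀ x ∈ Icc (0 : ℝ) l, HasDerivWithinAt τ (τ' x) (Icc 0 l) x)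
    (hτ'cont : ContinuousOn τ' (Icc 0 l))
    (h0 : τ 0 = 0) (hτl : τ l = 0)
    (P Q : ℝ → ℝ → ℝ) (P₁ Q₁ : ℝ → ℝ)
    (hPcont : ContinuousOn (fun p : ℝ × ℝ => P p.1 p.2) (Icc 0 l ×ˢ Icc 0 l))
    (hQcont : ContinuousOn (fun p : ℝ × ℝ => Q p.1 p.2) (Icc 0 l ×ˢ Icc 0 l))
    (hP₁ : ContinuousOn P₁ (Icc 0 l)) (hQ₁ : ContinuousOn Q₁ (Icc 0 l))
    (hPz : ∀ x ∈ Icc (0 : ℝ) l, ∀ z ∈ Icc (0 : ℝ) l,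
      HasDerivWithinAt (fun z' => P x z') (-(P₁ x * P₁ z)) (Icc 0 l) z)
    (hQz : ∀ x ∈ Icc (0 : ℝ) l, ∀ z ∈ Icc (0 : ℝ) l,
      HasDerivWithinAt (fun z' => Q x z') (-(Q₁ x * Q₁ z)) (Icc 0 l) z)
    (hPdiag : ∀ x ∈ Icc (0 : ℝ) l, 0 ≤ P x x)
    (hQdiag : ∀ x ∈ Icc (0 : ℝ) l, Q x x ≤ 0) :
    0 ≤ ∫ x in (0 : ℝ)..l, τ x *
      (γ₁ * τ' x + γ₂ * (∫ z in (0 : ℝ)..x, τ' z * P x z) +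
        γ₃ * ∫ z in x..l, τ' z * Q x z) := by
  have hl' : (0:ℝ) ≤ l := hl.le
  have hIcc : uIcc (0:ℝ) l = Icc 0 l := uIcc_of_le hl'
  have hτc : ContinuousOn τ (Icc 0 l) := fun x hx => (hτ' x hx).continuousWithinAt
  set f : ℝ → ℝ := fun z => τ z * P₁ z with hfdef
  set g : ℝ → ℝ := fun z => τ z * Q₁ z with hgdef
  have hfc : ContinuousOn f (Icc 0 l) := hτc.mul hP₁
  have hgc : ContinuousOn g (Icc 0 l) := hτc.mul hQ₁
  set F : ℝ → ℝ := fun x => ∫ z in (0:ℝ)..x, f z with hFdef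
  set G : ℝ → ℝ := fun x => ∫ z in x..l, g z with hGdef
  have hFc : ContinuousOn F (Icc 0 l) := by
    have := intervalIntegral.continuousOn_primitive_interval
      (f := f) (a := (0:ℝ)) (b := l) (μ := volume) (by rw [hIcc]; exact hfc.integrableOn_Icc)
    rwa [hIcc] at this
  have hGc : ContinuousOn G (Icc 0 l) := by
    have := intervalIntegral.continuousOn_primitive_interval_left
      (f := g) (a := (0:ℝ)) (b := l) (μ := volume) (by rw [hIcc]; exact hgc.integrableOn_Icc)
    rwa [hIcc] at this
  have hPxc : ∀ x ∈ Icc (0:ℝ) l, ContinuousOn (fun z => P x z) (Icc 0 l) := by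
    intro x hx
    exact hPcont.comp ((continuous_const.prodMk continuous_id).continuousOn)
      (fun z hz => Set.mk_mem_prod hx hz)
  have hQxc : ∀ x ∈ Icc (0:ℝ) l, ContinuousOn (fun z => Q x z) (Icc 0 l) := by
    intro x hx
    exact hQcont.comp ((continuous_const.prodMk continuous_id).continuousOn)
      (fun z hz => Set.mk_mem_prod hx hz)
  -- integration by parts for the P-term
  have keyP : ∀ x ∈ Icc (0:ℝ) l,
      (∫ z in (0:ℝ)..x, τ' z * P x z) = τ x * P x x + P₁ x * F x := by
    intro x hx
    have hsub : Icc (0:ℝ) x ⊆ Icc 0 l := Icc_subset_Icc le_rfl hx.2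
    have h1c : ContinuousOn (fun z => τ' z * P x z) (Icc 0 x) :=
      (hτ'cont.mul (hPxc x hx)).mono hsub
    have h2c : ContinuousOn (fun z => τ z * (-(P₁ x * P₁ z))) (Icc 0 x) :=
      (hτc.mul ((continuousOn_const.mul hP₁).neg)).mono hsub
    have h1i : IntervalIntegrable (fun z => τ' z * P x z) volume 0 x :=
      h1c.intervalIntegrable_of_Icc hx.1
    have h2i : IntervalIntegrable (fun z => τ z * (-(P₁ x * P₁ z))) volume 0 x :=
      h2c.intervalIntegrable_of_Icc hx.1
    have hderiv : ∀ z ∈ Ioo (0:ℝ) x, HasDerivAt (fun z => τ z * P x z)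
        (τ' z * P x z + τ z * (-(P₁ x * P₁ z))) z := by
      intro z hz
      have hzl : z ∈ Ioo (0:ℝ) l := ⟨hz.1, hz.2.trans_le hx.2⟩
      have hzm : z ∈ Icc (0:ℝ) l := Ioo_subset_Icc_self hzl
      have hn : Icc (0:ℝ) l ∈ 𝓝 z := Icc_mem_nhds hzl.1 hzl.2
      exact ((hτ' z hzm).hasDerivAt hn).mul ((hPz x hx z hzm).hasDerivAt hn)
    have hFTC := intervalIntegral.integral_eq_sub_of_hasDerivAt_of_le hx.1
      ((hτc.mul (hPxc x hx)).mono hsub) hderiv (h1i.add h2i)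
    rw [intervalIntegral.integral_add h1i h2i] at hFTC
    have h2eq : (∫ z in (0:ℝ)..x, τ z * (-(P₁ x * P₁ z))) = -(P₁ x) * F x := by
      rw [hFdef]
      rw [← intervalIntegral.integral_const_mul]
      apply intervalIntegral.integral_congr
      intro z _
      simp only [hfdef]
      ring
    rw [h2eq] at hFTC
    simp only [Pi.mul_apply, h0, zero_mul] at hFTC
    linarith [hFTC]
  -- integration by parts for the Q-term
  have keyQ : ∀ x ∈ Icc (0:ℝ) l,
      (∫ z in x..l, τ' z * Q x z) = -(τ x * Q x x) + Q₁ x * G x := by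
    intro x hx
    have hsub : Icc x l ⊆ Icc 0 l := Icc_subset_Icc hx.1 le_rfl
    have h1c : ContinuousOn (fun z => τ' z * Q x z) (Icc x l) :=
      (hτ'cont.mul (hQxc x hx)).mono hsub
    have h2c : ContinuousOn (fun z => τ z * (-(Q₁ x * Q₁ z))) (Icc x l) :=
      (hτc.mul ((continuousOn_const.mul hQ₁).neg)).mono hsub
    have h1i : IntervalIntegrable (fun z => τ' z * Q x z) volume x l :=
      h1c.intervalIntegrable_of_Icc hx.2
    have h2i : IntervalIntegrable (fun z => τ z * (-(Q₁ x * Q₁ z))) volume x l :=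
      h2c.intervalIntegrable_of_Icc hx.2
    have hderiv : ∀ z ∈ Ioo x l, HasDerivAt (fun z => τ z * Q x z)
        (τ' z * Q x z + τ z * (-(Q₁ x * Q₁ z))) z := by
      intro z hz
      have hzl : z ∈ Ioo (0:ℝ) l := ⟨lt_of_le_of_lt hx.1 hz.1, hz.2⟩
      have hzm : z ∈ Icc (0:ℝ) l := Ioo_subset_Icc_self hzl
      have hn : Icc (0:ℝ) l ∈ 𝓝 z := Icc_mem_nhds hzl.1 hzl.2
      exact ((hτ' z hzm).hasDerivAt hn).mul ((hQz x hx z hzm).hasDerivAt hn)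
    have hFTC := intervalIntegral.integral_eq_sub_of_hasDerivAt_of_le hx.2
      ((hτc.mul (hQxc x hx)).mono hsub) hderiv (h1i.add h2i)
    rw [intervalIntegral.integral_add h1i h2i] at hFTC
    have h2eq : (∫ z in x..l, τ z * (-(Q₁ x * Q₁ z))) = -(Q₁ x) * G x := by
      rw [hGdef]
      rw [← intervalIntegral.integral_const_mul]
      apply intervalIntegral.integral_congr
      intro z _
      simp only [hgdef]
      ring
    rw [h2eq] at hFTC
    simp only [Pi.mul_apply, hτl, zero_mul] at hFTC
    linarith [hFTC]
  -- rewrite the integrand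
  have hcongr : (∫ x in (0:ℝ)..l, τ x *
      (γ₁ * τ' x + γ₂ * (∫ z in (0:ℝ)..x, τ' z * P x z) +
        γ₃ * ∫ z in x..l, τ' z * Q x z)) =
      ∫ x in (0:ℝ)..l, (γ₁ * (τ x * τ' x) +
        (γ₂ * (τ x ^ 2 * P x x + f x * F x) +
         γ₃ * (τ x ^ 2 * (-(Q x x)) + g x * G x))) := by
    apply intervalIntegral.integral_congr
    intro x hx
    rw [hIcc] at hx
    dsimp only
    rw [keyP x hx, keyQ x hx]
    simp only [hfdef, hgdef]
    ring
  rw [hcongr]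
  -- integrability of the pieces
  have c1 : ContinuousOn (fun x => γ₁ * (τ x * τ' x)) (Icc 0 l) :=
    continuousOn_const.mul (hτc.mul hτ'cont)
  have hPd : ContinuousOn (fun x => P x x) (Icc 0 l) :=
    hPcont.comp ((continuous_id.prodMk continuous_id).continuousOn) (fun x hx => ⟨hx, hx⟩)
  have hQd : ContinuousOn (fun x => Q x x) (Icc 0 l) :=
    hQcont.comp ((continuous_id.prodMk continuous_id).continuousOn) (fun x hx => ⟨hx, hx⟩)
  have c2 : ContinuousOn (fun x => γ₂ * (τ x ^ 2 * P x x + f x * F x)) (Icc 0 l) :=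
    continuousOn_const.mul (((hτc.pow 2).mul hPd).add (hfc.mul hFc))
  have c3 : ContinuousOn (fun x => γ₃ * (τ x ^ 2 * (-(Q x x)) + g x * G x)) (Icc 0 l) :=
    continuousOn_const.mul (((hτc.pow 2).mul hQd.neg).add (hgc.mul hGc))
  have i1 : IntervalIntegrable (fun x => γ₁ * (τ x * τ' x)) volume 0 l :=
    c1.intervalIntegrable_of_Icc hl'
  have i2 : IntervalIntegrable (fun x => γ₂ * (τ x ^ 2 * P x x + f x * F x)) volume 0 l :=
    c2.intervalIntegrable_of_Icc hl'
  have i3 : IntervalIntegrable (fun x => γ₃ * (τ x ^ 2 * (-(Q x x)) + g x * G x)) volume 0 l :=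
    c3.intervalIntegrable_of_Icc hl'
  rw [intervalIntegral.integral_add i1 (i2.add i3), intervalIntegral.integral_add i2 i3,
    intervalIntegral.integral_const_mul, intervalIntegral.integral_const_mul,
    intervalIntegral.integral_const_mul]
  -- first integral vanishes
  have I1 : (∫ x in (0:ℝ)..l, τ x * τ' x) = 0 := by
    have hd : ∀ x ∈ Ioo (0:ℝ) l, HasDerivAt (fun y => τ y ^ 2 / 2) (τ x * τ' x) x := by
      intro x hx
      have hn : Icc (0:ℝ) l ∈ 𝓝 x := Icc_mem_nhds hx.1 hx.2
      have h := (((hτ' x (Ioo_subset_Icc_self hx)).hasDerivAt hn).pow 2).div_const 2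
      simp only [Pi.pow_apply] at h
      refine h.congr_deriv ?_
      ring
    have := intervalIntegral.integral_eq_sub_of_hasDerivAt_of_le hl'
      ((hτc.pow 2).div_const 2) hd ((hτc.mul hτ'cont).intervalIntegrable_of_Icc hl')
    rw [this, Pi.pow_apply, Pi.pow_apply, h0, hτl]
    ring
  rw [I1, mul_zero, zero_add]
  -- nonnegativity of the remaining two integrals
  have smP : ∀ x ∈ Ioo (0:ℝ) l, StronglyMeasurableAtFilter f (𝓝 x) volume := by
    intro x hx
    exact ⟨Icc 0 l, Icc_mem_nhds hx.1 hx.2, hfc.aestronglyMeasurable measurableSet_Icc⟩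
  have smQ : ∀ x ∈ Ioo (0:ℝ) l, StronglyMeasurableAtFilter g (𝓝 x) volume := by
    intro x hx
    exact ⟨Icc 0 l, Icc_mem_nhds hx.1 hx.2, hgc.aestronglyMeasurable measurableSet_Icc⟩
  have I3 : (∫ x in (0:ℝ)..l, f x * F x) = F l ^ 2 / 2 := by
    have hd : ∀ x ∈ Ioo (0:ℝ) l, HasDerivAt (fun y => F y ^ 2 / 2) (f x * F x) x := by
      intro x hx
      have hn : Icc (0:ℝ) l ∈ 𝓝 x := Icc_mem_nhds hx.1 hx.2
      have hfi : IntervalIntegrable f volume 0 x :=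
        (hfc.mono (Icc_subset_Icc le_rfl hx.2.le)).intervalIntegrable_of_Icc hx.1.le
      have hdF : HasDerivAt F (f x) x :=
        intervalIntegral.integral_hasDerivAt_right hfi (smP x hx) (hfc.continuousAt hn)
      have h := (hdF.pow 2).div_const 2
      simp only [Pi.pow_apply] at h
      refine h.congr_deriv ?_
      ring
    have := intervalIntegral.integral_eq_sub_of_hasDerivAt_of_le hl'
      ((hFc.pow 2).div_const 2) hd ((hfc.mul hFc).intervalIntegrable_of_Icc hl')
    rw [this]
    have hF0 : F 0 = 0 := intervalIntegral.integral_same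
    rw [Pi.pow_apply, Pi.pow_apply, hF0]
    ring
  have I5 : (∫ x in (0:ℝ)..l, g x * G x) = G 0 ^ 2 / 2 := by
    have hd : ∀ x ∈ Ioo (0:ℝ) l, HasDerivAt (fun y => G y ^ 2 / 2) (-(g x * G x)) x := by
      intro x hx
      have hn : Icc (0:ℝ) l ∈ 𝓝 x := Icc_mem_nhds hx.1 hx.2
      have hgi : IntervalIntegrable g volume x l :=
        (hgc.mono (Icc_subset_Icc hx.1.le le_rfl)).intervalIntegrable_of_Icc hx.2.le
      have hdG : HasDerivAt G (-(g x)) x :=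
        intervalIntegral.integral_hasDerivAt_left hgi (smQ x hx) (hgc.continuousAt hn)
      have h := (hdG.pow 2).div_const 2
      simp only [Pi.pow_apply] at h
      refine h.congr_deriv ?_
      ring
    have hint : IntervalIntegrable (fun x => -(g x * G x)) volume 0 l :=
      ((hgc.mul hGc).neg).intervalIntegrable_of_Icc hl'
    have hFTC := intervalIntegral.integral_eq_sub_of_hasDerivAt_of_le hl'
      ((hGc.pow 2).div_const 2) hd hint
    have hGl : G l = 0 := intervalIntegral.integral_same
    rw [intervalIntegral.integral_neg] at hFTC
    rw [Pi.pow_apply, Pi.pow_apply, hGl] at hFTC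
    have : (∫ x in (0:ℝ)..l, g x * G x) = G 0 ^ 2 / 2 - 0 ^ 2 / 2 := by linarith
    simpa using this
  have I2 : 0 ≤ ∫ x in (0:ℝ)..l, τ x ^ 2 * P x x := by
    apply intervalIntegral.integral_nonneg hl'
    intro x hx
    exact mul_nonneg (sq_nonneg _) (hPdiag x hx)
  have I4 : 0 ≤ ∫ x in (0:ℝ)..l, τ x ^ 2 * (-(Q x x)) := by
    apply intervalIntegral.integral_nonneg hl'
    intro x hx
    exact mul_nonneg (sq_nonneg _) (neg_nonneg.mpr (hQdiag x hx))
  have iP : IntervalIntegrable (fun x => τ x ^ 2 * P x x) volume 0 l :=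
    ((hτc.pow 2).mul hPd).intervalIntegrable_of_Icc hl'
  have ifF : IntervalIntegrable (fun x => f x * F x) volume 0 l :=
    (hfc.mul hFc).intervalIntegrable_of_Icc hl'
  have iQ : IntervalIntegrable (fun x => τ x ^ 2 * (-(Q x x))) volume 0 l :=
    ((hτc.pow 2).mul hQd.neg).intervalIntegrable_of_Icc hl'
  have igG : IntervalIntegrable (fun x => g x * G x) volume 0 l :=
    (hgc.mul hGc).intervalIntegrable_of_Icc hl'
  rw [intervalIntegral.integral_add iP ifF, intervalIntegral.integral_add iQ igG, I3, I5]
  have h1 : 0 ≤ F l ^ 2 / 2 := by positivity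
  have h2 : 0 ≤ G 0 ^ 2 / 2 := by positivity
  have := mul_nonneg hγ₂ (add_nonneg I2 h1)
  have := mul_nonneg hγ₃ (add_nonneg I4 h2)
  linarith
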